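/- Every compact Hausdorff space with countable tightness contains no free sequence of length ω₁; more precisely, in a compact Hausdorff space X the supremum of lengths of free sequences equals the tightness of X. -/

import Mathlib

open Cardinal

/-- `f : α → X` (with `α` well-ordered) is a free sequence: for every `b`,
the closure of the initial part is disjoint from the closure of the final part. -/
def IsFreeSequence {X : Type u} [TopologicalSpace X] {α : Type u} [LinearOrder α]
    (f : α → X) : Prop :=
  ∀ b : α, closure (f '' {a | a < b}) ∩ closure (f '' {a | b ≤ a}) = ∅

/-- The tightness `t(X)`: the least infinite cardinal `κ` such that whenever
`x ∈ closure A` there is `B ⊆ A` with `#B ≤ κ` and `x ∈ closure B`. -/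
noncomputable def tightness (X : Type u) [TopologicalSpace X] : Cardinal.{u} :=
  sInf {κ | Cardinal.aleph0 ≤ κ ∧ ∀ (A : Set X) (x : X), x ∈ closure A →
    ∃ B ⊆ A, #B ≤ κ ∧ x ∈ closure B}

open Set Topology

section Aux

variable {X : Type u} [TopologicalSpace X]

/-- A free sequence is injective. -/
theorem IsFreeSequence.injective {α : Type u} [LinearOrder α] {f : α → X}
    (hf : IsFreeSequence f) : Function.Injective f := by
  have key : ∀ a b : α, a < b → f a ≠ f b := by
    intro a b hab heq
    have h1 : f a ∈ closure (f '' {c | c < b}) := subset_closure ⟨a, hab, rfl⟩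
    have h2 : f b ∈ closure (f '' {c | b ≤ c}) := subset_closure ⟨b, le_refl b, rfl⟩
    rw [heq] at h1
    have : f b ∈ closure (f '' {c | c < b}) ∩ closure (f '' {c | b ≤ c}) := ⟨h1, h2⟩
    rw [hf b] at this
    exact this
  intro a b hab
  by_contra hne
  rcases lt_or_gt_of_ne hne with h | h
  · exact key a b h hab
  · exact key b a h hab.symm

/-- Key compactness lemma: if `D` is `κ`-closed (closed under closures of small subsets),
`p ∈ closure D`, and `(W i)` is a small family of open neighborhoods of `p`, then `D`
meets the intersection of the closures of the `W i`. -/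
theorem key_nonempty [CompactSpace X] {κ : Cardinal.{u}} (hκ : ℵ₀ ≤ κ)
    {D : Set X} (hD : ∀ S : Set X, S ⊆ D → #S ≤ κ → closure S ⊆ D)
    {p : X} (hpD : p ∈ closure D)
    {ι : Type u} (hι : #ι ≤ κ) {W : ι → Set X}
    (hWo : ∀ i, IsOpen (W i)) (hWp : ∀ i, p ∈ W i) :
    (D ∩ ⋂ i, closure (W i)).Nonempty := by
  classical
  have hb : ∀ F : Finset ι, ((⋂ i ∈ F, W i) ∩ D).Nonempty := by
    intro F
    refine mem_closure_iff.mp hpD _ (isOpen_biInter_finset fun i _ => hWo i) ?_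
    exact mem_iInter₂.mpr fun i _ => hWp i
  choose b hbmem using hb
  set K : Finset ι → Set X := fun F => closure (b '' {G | F ⊆ G}) with hK
  have hKne : ∀ F, (K F).Nonempty := fun F => ⟨b F, subset_closure ⟨F, Finset.Subset.refl F, rfl⟩⟩
  have hKdir : Directed (· ⊇ ·) K := by
    intro F G
    refine ⟨F ∪ G, closure_mono (Set.image_mono fun H hH => ?_),
      closure_mono (Set.image_mono fun H hH => ?_)⟩
    · exact Finset.Subset.trans Finset.subset_union_left hH
    · exact Finset.Subset.trans Finset.subset_union_right hH
  obtain ⟨z, hz⟩ := IsCompact.nonempty_iInter_of_directed_nonempty_isCompact_isClosed K hKdir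
    hKne (fun F => isClosed_closure.isCompact) (fun F => isClosed_closure)
  rw [mem_iInter] at hz
  have hzD : z ∈ D := by
    have h1 : Set.range b ⊆ D := by rintro _ ⟨F, rfl⟩; exact (hbmem F).2
    have h2 : #(Set.range b) ≤ κ := by
      refine le_trans mk_range_le ?_
      cases finite_or_infinite ι with
      | inl h =>
        haveI := Fintype.ofFinite ι
        exact le_of_lt (lt_of_lt_of_le (lt_aleph0_of_finite (Finset ι)) hκ)
      | inr h => rw [mk_finset_of_infinite]; exact hι
    have h3 : K ∅ ⊆ closure (Set.range b) :=
      closure_mono (image_subset_range b _)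
    exact hD (Set.range b) h1 h2 (h3 (hz ∅))
  have hzW : ∀ i, z ∈ closure (W i) := by
    intro i
    have hsub : b '' {G | {i} ⊆ G} ⊆ W i := by
      rintro _ ⟨G, hG, rfl⟩
      have h1 := (hbmem G).1
      exact (mem_iInter₂.mp h1) i (hG (Finset.mem_singleton_self i))
    exact closure_mono hsub (hz {i})
  exact ⟨z, hzD, mem_iInter.mpr hzW⟩

/-- In a compact Hausdorff space, a point not in a closed set has an open neighborhood
whose closure misses the closed set. -/
theorem exists_sep [CompactSpace X] [T2Space X] {p : X} {C : Set X}
    (hC : IsClosed C) (hp : p ∉ C) :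
    ∃ U : Set X, IsOpen U ∧ p ∈ U ∧ closure U ∩ C = ∅ := by
  have hmem : Cᶜ ∈ 𝓝 p := hC.isOpen_compl.mem_nhds hp
  obtain ⟨N, ⟨hN1, hN2⟩, hN3⟩ := (closed_nhds_basis p).mem_iff.mp hmem
  refine ⟨interior N, isOpen_interior, mem_interior_iff_mem_nhds.mpr hN1, ?_⟩
  have h4 : closure (interior N) ⊆ N := closure_minimal interior_subset hN2
  rw [eq_empty_iff_forall_notMem]
  rintro x ⟨hx1, hx2⟩
  exact hN3 (h4 hx1) hx2

/-- Main construction: if tightness fails at `κ` for a witness `A`, `p`, then there is a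
free sequence indexed by (the canonical type of order type) `κ⁺`. -/
theorem exists_free_of_bad [CompactSpace X] [T2Space X] {κ : Cardinal.{u}} (hκ : ℵ₀ ≤ κ)
    {A : Set X} {p : X} (hpA : p ∈ closure A)
    (hbad : ∀ B : Set X, B ⊆ A → #B ≤ κ → p ∉ closure B) :
    ∃ f : (Order.succ κ).ord.ToType → X, IsFreeSequence f := by
  classical
  set ι := (Order.succ κ).ord.ToType with hιdef
  letI : IsWellOrder ι (· < ·) := isWellOrder_lt
  -- the κ-closure of A
  set D : Set X := {x | ∃ B : Set X, B ⊆ A ∧ #B ≤ κ ∧ x ∈ closure B} with hDdef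
  have hAD : A ⊆ D := fun a ha =>
    ⟨{a}, singleton_subset_iff.mpr ha,
      by rw [mk_singleton]; exact le_trans one_le_aleph0 hκ, subset_closure (mem_singleton a)⟩
  have hpD : p ∈ closure D := closure_mono hAD hpA
  have hpnD : p ∉ D := by rintro ⟨B, h1, h2, h3⟩; exact hbad B h1 h2 h3
  have hDk : ∀ S : Set X, S ⊆ D → #S ≤ κ → closure S ⊆ D := by
    intro S hSD hSκ
    have hex : ∀ s : ↥S, ∃ B : Set X, B ⊆ A ∧ #B ≤ κ ∧ (s : X) ∈ closure B :=
      fun s => hSD s.2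
    choose Bf hB1 hB2 hB3 using hex
    set B' : Set X := ⋃ s : ↥S, Bf s with hB'def
    have hB'A : B' ⊆ A := iUnion_subset fun s => hB1 s
    have hB'κ : #B' ≤ κ := by
      refine le_trans (mk_iUnion_le _) ?_
      refine le_trans (mul_le_mul' hSκ (ciSup_le' fun s => hB2 s)) ?_
      rw [mul_eq_self hκ]
    have hSB' : S ⊆ closure B' := fun s hs =>
      closure_mono (subset_iUnion Bf ⟨s, hs⟩) (hB3 ⟨s, hs⟩)
    intro x hx
    exact ⟨B', hB'A, hB'κ, closure_minimal hSB' isClosed_closure hx⟩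
  -- initial segments of ι are small
  have hsmall : ∀ i : ι, #{j : ι | j < i} ≤ κ := by
    intro i
    have h1 : Ordinal.typein ((· < ·) : ι → ι → Prop) i < (Order.succ κ).ord := by
      have := Ordinal.typein_lt_type ((· < ·) : ι → ι → Prop) i
      rwa [Ordinal.type_toType] at this
    have h2 : (Ordinal.typein ((· < ·) : ι → ι → Prop) i).card < Order.succ κ :=
      Cardinal.lt_ord.mp h1
    have h3 : #{j : ι | j < i} = (Ordinal.typein ((· < ·) : ι → ι → Prop) i).card :=
      Ordinal.card_typein (r := ((· < ·) : ι → ι → Prop)) i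
    rw [h3]
    exact Order.lt_succ_iff.mp h2
  have hsmall' : ∀ i : ι, #{j : ι | j ≤ i} ≤ κ := by
    intro i
    have he : {j : ι | j ≤ i} = insert i {j : ι | j < i} := by
      ext j
      simp only [mem_setOf_eq, mem_insert_iff]
      constructor
      · intro h; rcases h.lt_or_eq with h | h
        · exact Or.inr h
        · exact Or.inl h
      · rintro (h | h)
        · exact le_of_eq h
        · exact le_of_lt h
    rw [he]
    calc #(insert i {j : ι | j < i} : Set ι) ≤ #{j : ι | j < i} + 1 := mk_insert_le
      _ ≤ κ + 1 := by exact add_le_add_left (hsmall i) 1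
      _ = κ := add_one_eq hκ
  -- choice of separating open neighborhoods
  have hPhi : ∀ S : Set X, ∃ U : Set X, IsOpen U ∧ p ∈ U ∧
      (p ∉ closure S → closure U ∩ closure S = ∅) := by
    intro S
    by_cases h : p ∈ closure S
    · exact ⟨Set.univ, isOpen_univ, mem_univ p, fun h' => absurd h h'⟩
    · obtain ⟨U, h1, h2, h3⟩ := exists_sep isClosed_closure h
      exact ⟨U, h1, h2, fun _ => h3⟩
  choose Phi hPhiO hPhiP hPhiD using hPhi
  -- transfinite recursion
  have wf : WellFounded ((· < ·) : ι → ι → Prop) := wellFounded_lt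
  have key : ∀ (i : ι) (g : ∀ k, k < i → X),
      (D ∩ ⋂ j : {j : ι // j ≤ i},
        closure (Phi {z | ∃ k, ∃ h : k < j.1, z = g k (h.trans_le j.2)})).Nonempty := by
    intro i g
    exact key_nonempty hκ hDk hpD (hsmall' i) (fun j => hPhiO _) (fun j => hPhiP _)
  set x : ι → X := wf.fix (fun i g => (key i g).some) with hxdef
  have hxeq : ∀ i, x i = (key i (fun k _ => x k)).some :=
    fun i => wf.fix_eq (fun i g => (key i g).some) i
  have himg : ∀ j : ι, {z | ∃ k, ∃ _ : k < j, z = x k} = x '' {k | k < j} := by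
    intro j
    ext z
    constructor
    · rintro ⟨k, h1, h2⟩; exact ⟨k, h1, h2.symm⟩
    · rintro ⟨k, h1, h2⟩; exact ⟨k, h1, h2.symm⟩
  have hxmem : ∀ i : ι, x i ∈ D ∩ ⋂ j : {j : ι // j ≤ i},
      closure (Phi {z | ∃ k, ∃ h : k < j.1, z = x k}) := by
    intro i
    rw [hxeq i]
    exact (key i (fun k _ => x k)).some_mem
  have hxD : ∀ i, x i ∈ D := fun i => (hxmem i).1
  have hxtail : ∀ (i j : ι), j ≤ i → x i ∈ closure (Phi (x '' {k | k < j})) := by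
    intro i j hj
    have h1 := (hxmem i).2
    rw [mem_iInter] at h1
    have h2 := h1 ⟨j, hj⟩
    rwa [himg j] at h2
  -- freeness
  refine ⟨x, fun b => ?_⟩
  set S : Set X := x '' {a | a < b} with hSdef
  have hSD : S ⊆ D := by rintro _ ⟨k, _, rfl⟩; exact hxD k
  have hSκ : #S ≤ κ := le_trans mk_image_le (hsmall b)
  have hpS : p ∉ closure S := fun h => hpnD (hDk S hSD hSκ h)
  have hdisj := hPhiD S hpS
  have htail : closure (x '' {a | b ≤ a}) ⊆ closure (Phi S) := by
    refine closure_minimal ?_ isClosed_closure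
    rintro _ ⟨a, ha, rfl⟩
    exact hxtail a b ha
  rw [eq_empty_iff_forall_notMem]
  rintro z ⟨h1, h2⟩
  have : z ∈ closure (Phi S) ∩ closure S := ⟨htail h2, h1⟩
  rw [hdisj] at this
  exact this

/-- Easy direction: any free sequence in a compact space has length at most any cardinal
witnessing the tightness property. -/
theorem free_card_le [CompactSpace X] {κ : Cardinal.{u}} (hκ : ℵ₀ ≤ κ)
    (ht : ∀ (A : Set X) (x : X), x ∈ closure A → ∃ B ⊆ A, #B ≤ κ ∧ x ∈ closure B)
    {α : Type u} [LinearOrder α] [IsWellOrder α (· < ·)] {f : α → X}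
    (hf : IsFreeSequence f) : #α ≤ κ := by
  by_contra hcon
  push_neg at hcon
  have hord : (Order.succ κ).ord ≤ Ordinal.type ((· < ·) : α → α → Prop) := by
    rw [Cardinal.ord_le, Ordinal.card_type]
    exact Order.succ_le_of_lt hcon
  set ι := (Order.succ κ).ord.ToType with hιdef
  letI : IsWellOrder ι (· < ·) := isWellOrder_lt
  have htype : Ordinal.type ((· < ·) : ι → ι → Prop) ≤ Ordinal.type ((· < ·) : α → α → Prop) := by
    rw [Ordinal.type_toType]; exact hord
  obtain ⟨e⟩ := Ordinal.type_le_iff'.mp htype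
  set g : ι → X := f ∘ e with hgdef
  have hmono : ∀ {a b : ι}, a < b → e a < e b := fun h => e.map_rel_iff.mpr h
  have hmono' : ∀ {a b : ι}, a ≤ b → e a ≤ e b := by
    intro a b h
    rcases h.lt_or_eq with h | h
    · exact (hmono h).le
    · rw [h]
  have hgfree : ∀ b : ι,
      closure (g '' {a | a < b}) ∩ closure (g '' {a | b ≤ a}) = ∅ := by
    intro b
    have h1 : g '' {a | a < b} ⊆ f '' {a | a < e b} := by
      rintro _ ⟨a, ha, rfl⟩; exact ⟨e a, hmono ha, rfl⟩
    have h2 : g '' {a | b ≤ a} ⊆ f '' {a | e b ≤ a} := by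
      rintro _ ⟨a, ha, rfl⟩; exact ⟨e a, hmono' ha, rfl⟩
    rw [eq_empty_iff_forall_notMem]
    rintro z ⟨hz1, hz2⟩
    have hz : z ∈ closure (f '' {a | a < e b}) ∩ closure (f '' {a | e b ≤ a}) :=
      ⟨closure_mono h1 hz1, closure_mono h2 hz2⟩
    rw [hf (e b)] at hz
    exact hz
  have hne : Nonempty ι := by
    refine Ordinal.nonempty_toType_iff.mpr ?_
    intro h0
    have h1 : Order.succ κ ≤ (0 : Ordinal).card := Cardinal.ord_le.mp (le_of_eq h0)
    rw [Ordinal.card_zero, le_zero_iff] at h1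
    exact Cardinal.succ_ne_zero κ h1
  set K : ι → Set X := fun b => closure (g '' {a | b ≤ a}) with hKdef
  have hKne : ∀ b, (K b).Nonempty := fun b => ⟨g b, subset_closure ⟨b, le_refl b, rfl⟩⟩
  have hKdir : Directed (· ⊇ ·) K := by
    intro a b
    rcases le_total a b with h | h
    · exact ⟨b, closure_mono (image_mono fun c hc => h.trans hc), subset_rfl⟩
    · exact ⟨a, subset_rfl, closure_mono (image_mono fun c hc => h.trans hc)⟩
  obtain ⟨z, hz⟩ := IsCompact.nonempty_iInter_of_directed_nonempty_isCompact_isClosed K hKdir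
    hKne (fun b => isClosed_closure.isCompact) (fun b => isClosed_closure)
  rw [mem_iInter] at hz
  have hzr : z ∈ closure (Set.range g) := by
    have b0 : ι := Classical.arbitrary ι
    refine closure_mono ?_ (hz b0)
    rintro _ ⟨a, _, rfl⟩
    exact ⟨a, rfl⟩
  obtain ⟨B, hBsub, hBκ, hzB⟩ := ht (Set.range g) z hzr
  have hidx : ∀ y : ↥B, ∃ a : ι, g a = (y : X) := fun y => hBsub y.2
  choose idx hidx' using hidx
  have hJκ : #(Set.range idx) < Ordinal.cof (Ordinal.type ((· < ·) : ι → ι → Prop)) := by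
    rw [Ordinal.type_toType]
    rw [(Cardinal.isRegular_succ hκ).cof_eq]
    exact lt_of_le_of_lt (le_trans mk_range_le hBκ) (Order.lt_succ κ)
  obtain ⟨b, hb⟩ := not_isCofinal_iff.mp (fun hc => absurd (Order.cof_le hc)
    (by rw [Ordinal.cof_type] at hJκ; exact hJκ.not_ge))
  have hBsub' : B ⊆ g '' {a | a < b} := by
    intro y hy
    exact ⟨idx ⟨y, hy⟩, hb _ (mem_range_self _), hidx' ⟨y, hy⟩⟩
  have h1 : z ∈ closure (g '' {a | a < b}) :=
    closure_mono hBsub' hzB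
  have h2 : z ∈ K b := hz b
  have h3 := hgfree b
  rw [eq_empty_iff_forall_notMem] at h3
  exact h3 z ⟨h1, h2⟩

end Aux

/-- Arhangel'skii: in a compact Hausdorff space, the supremum of the lengths of free
sequences equals the tightness. In particular, a compact Hausdorff space of countable
tightness contains no free sequence of length `ω₁`. -/
theorem tightness_eq_sup_free_sequences {X : Type u} [TopologicalSpace X]
    [CompactSpace X] [T2Space X] :
    Cardinal.aleph0 ⊔ sSup {c : Cardinal.{u} |
      ∃ (α : Type u) (_ : LinearOrder α) (_ : IsWellOrder α (· < ·)) (f : α → X),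
        IsFreeSequence f ∧ #α = c} = tightness X := by
  classical
  set S : Set Cardinal.{u} := {c : Cardinal.{u} |
      ∃ (α : Type u) (_ : LinearOrder α) (_ : IsWellOrder α (· < ·)) (f : α → X),
        IsFreeSequence f ∧ #α = c} with hSdef
  set T : Set Cardinal.{u} := {κ | Cardinal.aleph0 ≤ κ ∧ ∀ (A : Set X) (x : X), x ∈ closure A →
    ∃ B ⊆ A, #B ≤ κ ∧ x ∈ closure B} with hTdef
  have hTne : T.Nonempty := by
    refine ⟨Cardinal.aleph0 ⊔ #X, le_sup_left, fun A x hx => ⟨A, subset_rfl, ?_, hx⟩⟩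
    exact le_trans (Cardinal.mk_subtype_le _) le_sup_right
  have hτ : tightness X ∈ T := csInf_mem hTne
  obtain ⟨hτ0, hτt⟩ := hτ
  have hbddS : BddAbove S := by
    refine ⟨#X, ?_⟩
    rintro c ⟨α, _, _, f, hf, rfl⟩
    exact Cardinal.mk_le_of_injective hf.injective
  apply le_antisymm
  · refine sup_le hτ0 (csSup_le' ?_)
    rintro c ⟨α, _, _, f, hf, rfl⟩
    exact free_card_le hτ0 hτt hf
  · refine csInf_le' ⟨le_sup_left, ?_⟩
    intro A x hx
    by_contra hno
    push_neg at hno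
    have hbad : ∀ B : Set X, B ⊆ A → #B ≤ Cardinal.aleph0 ⊔ sSup S → x ∉ closure B := by
      intro B h1 h2 h3
      exact (hno B h1 h2) h3
    obtain ⟨f, hf⟩ := exists_free_of_bad le_sup_left hx hbad
    have hmem : Order.succ (Cardinal.aleph0 ⊔ sSup S) ∈ S := by
      refine ⟨(Order.succ (Cardinal.aleph0 ⊔ sSup S)).ord.ToType, inferInstance, isWellOrder_lt,
        f, hf, ?_⟩
      rw [Cardinal.mk_toType, Cardinal.card_ord]
    have h1 : Order.succ (Cardinal.aleph0 ⊔ sSup S) ≤ sSup S := le_csSup hbddS hmem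
    exact absurd (h1.trans le_sup_right) (Order.lt_succ (Cardinal.aleph0 ⊔ sSup S)).not_ge
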